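/- Let D(ξ) = Σ_{i=0}^{ℓ} D_i ξ^i with D_i ∈ ℝ^{p×p} be a polynomial matrix whose determinant det D(ξ) is not the zero polynomial. Then the following are equivalent: (i) every sequence y : ℕ → ℝ^p satisfying Σ_{i=0}^{ℓ} D_i y(k+i) = 0 for all k ∈ ℕ converges to 0 as k → ∞; (ii) every λ ∈ ℂ with det D(λ) = 0 satisfies |λ| < 1. -/

import Mathlib

open Matrix Polynomial
open Filter

noncomputable def shiftL (R : Type*) [Semiring R] : Module.End R (ℕ → R) :=
  LinearMap.funLeft R R (· + 1)

lemma shiftL_apply {R : Type*} [Semiring R] (x : ℕ → R) (k : ℕ) :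
    shiftL R x k = x (k + 1) := rfl

lemma shiftL_pow_apply (R : Type*) [Semiring R] (i : ℕ) (x : ℕ → R) (k : ℕ) :
    ((shiftL R ^ i) x) k = x (k + i) := by
  induction i generalizing x k with
  | zero => simp
  | succ n ih =>
    rw [pow_succ, Module.End.mul_apply, ih]
    simp [shiftL, LinearMap.funLeft, Nat.add_assoc]

lemma aeval_shiftL_apply {R : Type*} [CommSemiring R] (q : R[X]) {n : ℕ}
    (hn : q.natDegree < n) (x : ℕ → R) (k : ℕ) :
    ((Polynomial.aeval (shiftL R) q) x) k = ∑ i ∈ Finset.range n, q.coeff i * x (k + i) := by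
  rw [Polynomial.aeval_eq_sum_range' hn]
  simp [LinearMap.coe_sum, Finset.sum_apply, shiftL_pow_apply]

def applyE {p : ℕ} {R : Type*} [Semiring R]
    (M : Matrix (Fin p) (Fin p) (Module.End R (ℕ → R))) (u : Fin p → ℕ → R) :
    Fin p → ℕ → R := fun i => ∑ j, M i j (u j)

lemma applyE_mul {p : ℕ} {R : Type*} [Semiring R]
    (M N : Matrix (Fin p) (Fin p) (Module.End R (ℕ → R))) (u : Fin p → ℕ → R) :
    applyE (M * N) u = applyE M (applyE N u) := by
  funext i
  simp only [applyE, Matrix.mul_apply, LinearMap.coe_sum, Finset.sum_apply,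
    Module.End.mul_apply, map_sum]
  exact Finset.sum_comm

lemma applyE_zero {p : ℕ} {R : Type*} [Semiring R]
    (M : Matrix (Fin p) (Fin p) (Module.End R (ℕ → R))) :
    applyE M (0 : Fin p → ℕ → R) = 0 := by
  funext i
  simp [applyE]


/-- The polynomial matrix `D(ξ) = Σ_{i=0}^{ℓ} D_i ξ^i` built from its coefficient
matrices. -/
noncomputable def polyMatrix {a b ℓ : ℕ} (D : Fin (ℓ + 1) → Matrix (Fin a) (Fin b) ℝ) :
    Matrix (Fin a) (Fin b) (Polynomial ℝ) :=
  fun i j => ∑ k : Fin (ℓ + 1), Polynomial.C (D k i j) * Polynomial.X ^ (k : ℕ)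

lemma aeval_polyEntry {ℓ : ℕ} (c : Fin (ℓ + 1) → ℝ) (x : ℕ → ℝ) (k : ℕ) :
    (Polynomial.aeval (shiftL ℝ) (∑ κ : Fin (ℓ + 1), Polynomial.C (c κ) * Polynomial.X ^ (κ : ℕ)))
        x k = ∑ κ : Fin (ℓ + 1), c κ * x (k + κ) := by
  rw [map_sum]
  simp [LinearMap.coe_sum, Finset.sum_apply, Module.End.mul_apply,
    Module.algebraMap_end_apply, shiftL_pow_apply]

set_option maxHeartbeats 1000000 in
/-- scalar reduction: every component of a solution satisfies the scalar recurrence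
given by the determinant. -/
lemma component_scalar_recurrence {p ℓ : ℕ} (D : Fin (ℓ + 1) → Matrix (Fin p) (Fin p) ℝ)
    (y : ℕ → Fin p → ℝ)
    (h : ∀ k : ℕ, ∑ i : Fin (ℓ + 1), (D i).mulVec (y (k + i)) = 0) (i : Fin p) :
    (Polynomial.aeval (shiftL ℝ) (polyMatrix D).det) (fun k => y k i) = 0 := by
  set P : Matrix (Fin p) (Fin p) ℝ[X] := polyMatrix D with hP
  set Ψ : Matrix (Fin p) (Fin p) ℝ[X] →+* Matrix (Fin p) (Fin p) (Module.End ℝ (ℕ → ℝ)) :=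
    (Polynomial.aeval (shiftL ℝ) : ℝ[X] →ₐ[ℝ] Module.End ℝ (ℕ → ℝ)).toRingHom.mapMatrix with hΨ
  set u : Fin p → ℕ → ℝ := fun j k => y k j with hu
  have h1 : applyE (Ψ P) u = 0 := by
    funext a k
    have := congrFun (h k) a
    simp only [Finset.sum_apply, Matrix.mulVec, dotProduct, Pi.zero_apply] at this
    simp only [applyE, hΨ, RingHom.mapMatrix_apply, Matrix.map_apply, AlgHom.toRingHom_eq_coe,
      RingHom.coe_coe, Finset.sum_apply, Pi.zero_apply]
    rw [← this, Finset.sum_comm]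
    exact Finset.sum_congr rfl fun j _ => by
      rw [show P a j = ∑ κ : Fin (ℓ + 1), Polynomial.C (D κ a j) * Polynomial.X ^ (κ : ℕ) from rfl,
        aeval_polyEntry (fun κ => D κ a j) (u j) k]
  have h2 : P.adjugate * P = P.det • 1 := Matrix.adjugate_mul P
  have h3 : applyE (Ψ (P.adjugate * P)) u = 0 := by
    rw [_root_.map_mul Ψ, applyE_mul, h1, applyE_zero]
  rw [h2] at h3
  have h4 := congrFun h3 i
  simp only [applyE, hΨ, RingHom.mapMatrix_apply, Matrix.map_apply, AlgHom.toRingHom_eq_coe,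
    RingHom.coe_coe, Matrix.smul_apply, Matrix.one_apply, smul_eq_mul, mul_ite, mul_one,
    mul_zero, Pi.zero_apply] at h4
  have h5 : ∀ j : Fin p,
      (Polynomial.aeval (shiftL ℝ) (if i = j then P.det else 0)) (u j)
        = if i = j then (Polynomial.aeval (shiftL ℝ) P.det) (u i) else 0 := by
    intro j
    by_cases hij : i = j
    · subst hij; simp
    · simp [hij]
  rw [Finset.sum_congr rfl (fun j _ => h5 j), Finset.sum_ite_eq] at h4
  simpa using h4

lemma decay_step {lam : ℂ} (hlam : ‖lam‖ < 1) {x z : ℕ → ℂ}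
    (hz : Tendsto z atTop (nhds 0)) (hx : ∀ k, x (k + 1) = lam * x k + z k) :
    Tendsto x atTop (nhds 0) := by
  set r : ℝ := ‖lam‖ with hr
  have hr0 : 0 ≤ r := norm_nonneg lam
  rw [tendsto_zero_iff_norm_tendsto_zero]
  rw [tendsto_zero_iff_norm_tendsto_zero] at hz
  rw [Metric.tendsto_atTop]
  intro ε hε
  rw [Metric.tendsto_atTop] at hz
  obtain ⟨N₁, hN₁⟩ := hz (ε * (1 - r) / 2) (by nlinarith)
  have hzb : ∀ k ≥ N₁, ‖z k‖ ≤ ε * (1 - r) / 2 := by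
    intro k hk
    have := hN₁ k hk
    rw [Real.dist_eq, sub_zero, abs_of_nonneg (norm_nonneg _)] at this
    exact this.le
  have key : ∀ j : ℕ, ‖x (N₁ + j)‖ ≤ r ^ j * ‖x N₁‖ + ε / 2 := by
    intro j
    induction j with
    | zero => simp [le_add_of_nonneg_right (by positivity : (0:ℝ) ≤ ε / 2)]
    | succ n ih =>
      have h1 : ‖x (N₁ + (n + 1))‖ ≤ r * ‖x (N₁ + n)‖ + ‖z (N₁ + n)‖ := by
        rw [show N₁ + (n + 1) = (N₁ + n) + 1 by ring, hx]
        calc ‖lam * x (N₁ + n) + z (N₁ + n)‖ ≤ ‖lam * x (N₁ + n)‖ + ‖z (N₁ + n)‖ :=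
              norm_add_le _ _
          _ = r * ‖x (N₁ + n)‖ + ‖z (N₁ + n)‖ := by rw [norm_mul]
      have h2 : ‖z (N₁ + n)‖ ≤ ε * (1 - r) / 2 := hzb _ (Nat.le_add_right _ _)
      calc ‖x (N₁ + (n + 1))‖ ≤ r * ‖x (N₁ + n)‖ + ε * (1 - r) / 2 := by linarith
        _ ≤ r * (r ^ n * ‖x N₁‖ + ε / 2) + ε * (1 - r) / 2 := by
            have := mul_le_mul_of_nonneg_left ih hr0; linarith
        _ ≤ r ^ (n + 1) * ‖x N₁‖ + ε / 2 := by rw [pow_succ]; nlinarith [norm_nonneg (x N₁)]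
  have hpow : Tendsto (fun j : ℕ => r ^ j * ‖x N₁‖) atTop (nhds 0) := by
    simpa using (tendsto_pow_atTop_nhds_zero_of_lt_one hr0 hlam).mul_const ‖x N₁‖
  rw [Metric.tendsto_atTop] at hpow
  obtain ⟨J, hJ⟩ := hpow (ε / 2) (by positivity)
  refine ⟨N₁ + J, fun k hk => ?_⟩
  have hk' : k = N₁ + (k - N₁) := by omega
  have hJ' : J ≤ k - N₁ := by omega
  have h1 := key (k - N₁)
  have h2 := hJ (k - N₁) hJ'
  rw [Real.dist_eq, sub_zero, abs_of_nonneg (by positivity)] at h2 ⊢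
  rw [← hk'] at h1
  linarith

lemma scalar_decay_deg0 (q : ℂ[X]) (h0 : q.natDegree = 0) (hq0 : q ≠ 0) (x : ℕ → ℂ)
    (hx : (Polynomial.aeval (shiftL ℂ) q) x = 0) : x = 0 := by
  obtain ⟨c, rfl⟩ := Polynomial.natDegree_eq_zero.mp h0
  have hc : c ≠ 0 := fun h => hq0 (by simp [h])
  have hcx : c • x = 0 := by
    simpa [Polynomial.aeval_C, Module.algebraMap_end_apply] using hx
  rcases smul_eq_zero.mp hcx with h | h
  · exact absurd h hc
  · exact h

lemma scalar_decay : ∀ (n : ℕ) (q : ℂ[X]), q.natDegree ≤ n → q ≠ 0 →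
    (∀ μ : ℂ, q.IsRoot μ → ‖μ‖ < 1) →
    ∀ x : ℕ → ℂ, (Polynomial.aeval (shiftL ℂ) q) x = 0 → Tendsto x atTop (nhds 0) := by
  intro n
  induction n with
  | zero =>
    intro q hq hq0 _ x hx
    rw [scalar_decay_deg0 q (Nat.le_zero.mp hq) hq0 x hx]
    exact tendsto_const_nhds
  | succ n ih =>
    intro q hq hq0 hroot x hx
    by_cases h0 : q.natDegree = 0
    · rw [scalar_decay_deg0 q h0 hq0 x hx]
      exact tendsto_const_nhds
    · have hdeg : 0 < q.degree := Polynomial.natDegree_pos_iff_degree_pos.mp (Nat.pos_of_ne_zero h0)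
      obtain ⟨lam, hlamroot⟩ := Complex.exists_root hdeg
      obtain ⟨ψ, hψ⟩ := Polynomial.dvd_iff_isRoot.mpr hlamroot
      have hXlam : (Polynomial.X - Polynomial.C lam) ≠ 0 := Polynomial.X_sub_C_ne_zero lam
      have hψ0 : ψ ≠ 0 := by
        rintro rfl
        rw [mul_zero] at hψ
        exact hq0 hψ
      have hdegψ : ψ.natDegree ≤ n := by
        have hd : q.natDegree = 1 + ψ.natDegree := by
          rw [hψ, Polynomial.natDegree_mul hXlam hψ0, Polynomial.natDegree_X_sub_C]
        omega
      have hrootψ : ∀ μ : ℂ, ψ.IsRoot μ → ‖μ‖ < 1 := by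
        intro μ hμ
        apply hroot
        rw [Polynomial.IsRoot, hψ, Polynomial.eval_mul, hμ.eq_zero, mul_zero]
      set z : ℕ → ℂ := (Polynomial.aeval (shiftL ℂ) (Polynomial.X - Polynomial.C lam)) x with hz
      have hzrec : (Polynomial.aeval (shiftL ℂ) ψ) z = 0 := by
        have hcomm : ψ * (Polynomial.X - Polynomial.C lam) = q := by rw [hψ, mul_comm]
        rw [hz, ← Module.End.mul_apply, ← _root_.map_mul, hcomm]
        exact hx
      have hzlim := ih ψ hdegψ hψ0 hrootψ z hzrec
      refine decay_step (hroot lam hlamroot) hzlim ?_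
      intro k
      have hzk : z k = x (k + 1) - lam * x k := by
        rw [hz]
        simp [map_sub, Polynomial.aeval_X, Polynomial.aeval_C, Module.algebraMap_end_apply,
          shiftL_apply]
      rw [hzk]; ring

/-- **Asymptotic stability of an autonomous kernel representation.** Let `D(ξ)` be a
square polynomial matrix with `det D(ξ)` not the zero polynomial. Every solution of
`D(q) y = 0` converges to zero if and only if every root `λ ∈ ℂ` of `det D` satisfies
`|λ| < 1`. -/
theorem kernel_asymptotically_stable_iff_roots_in_unit_disc {p ℓ : ℕ}
    (D : Fin (ℓ + 1) → Matrix (Fin p) (Fin p) ℝ)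
    (hD : (polyMatrix D).det ≠ 0) :
    (∀ y : ℕ → Fin p → ℝ,
        (∀ k : ℕ, ∑ i : Fin (ℓ + 1), (D i).mulVec (y (k + i)) = 0) →
        Filter.Tendsto (fun k => ‖y k‖) Filter.atTop (nhds 0)) ↔
      ∀ lam : ℂ, Polynomial.aeval lam (polyMatrix D).det = 0 → ‖lam‖ < 1 := by
  constructor
  · -- stability → roots in disc
    intro hstab lam hlam
    by_contra habs
    push_neg at habs
    set M : Matrix (Fin p) (Fin p) ℂ := (polyMatrix D).map (Polynomial.aeval lam) with hM
    have hdet : M.det = 0 := by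
      have hmapdet := RingHom.map_det
        ((Polynomial.aeval lam : ℝ[X] →ₐ[ℝ] ℂ) : ℝ[X] →+* ℂ) (polyMatrix D)
      rw [RingHom.mapMatrix_apply] at hmapdet
      simp only [RingHom.coe_coe] at hmapdet
      rw [hM, ← hmapdet]
      exact hlam
    obtain ⟨v, hv0, hMv⟩ := Matrix.exists_mulVec_eq_zero_iff.mpr hdet
    have hv : 0 < ‖v‖ := norm_pos_iff.mpr hv0
    set w : ℕ → Fin p → ℂ := fun k j => lam ^ k * v j with hw
    have hMentry : ∀ a j, M a j = ∑ κ : Fin (ℓ + 1), (D κ a j : ℂ) * lam ^ (κ : ℕ) := by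
      intro a j
      simp [hM, polyMatrix, Matrix.map_apply, map_sum, _root_.map_mul, Polynomial.aeval_C,
        Polynomial.aeval_X_pow, Complex.coe_algebraMap]
    have hkey : ∀ (k : ℕ) (a : Fin p),
        ∑ κ : Fin (ℓ + 1), ∑ j, (D κ a j : ℂ) * w (k + κ) j = 0 := by
      intro k a
      have h1 : ∀ (κ : Fin (ℓ + 1)) (j : Fin p), (D κ a j : ℂ) * w (k + κ) j
          = lam ^ k * ((D κ a j : ℂ) * lam ^ (κ : ℕ) * v j) := by
        intro κ j
        rw [hw]
        show (D κ a j : ℂ) * (lam ^ (k + (κ : ℕ)) * v j) = _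
        rw [pow_add]; ring
      calc ∑ κ : Fin (ℓ + 1), ∑ j, (D κ a j : ℂ) * w (k + κ) j
          = lam ^ k * ∑ j, (∑ κ : Fin (ℓ + 1), (D κ a j : ℂ) * lam ^ (κ : ℕ)) * v j := by
            rw [Finset.mul_sum, Finset.sum_comm]
            refine Finset.sum_congr rfl fun j _ => ?_
            rw [Finset.sum_mul, Finset.mul_sum]
            exact Finset.sum_congr rfl fun κ _ => h1 κ j
        _ = lam ^ k * (M.mulVec v a) := by
            congr 1
            simp only [Matrix.mulVec, dotProduct, hMentry]
        _ = 0 := by rw [hMv]; simp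
    have hparts : ∀ f : ℂ →ₗ[ℝ] ℝ, ∀ k : ℕ,
        ∑ i : Fin (ℓ + 1), (D i).mulVec ((fun k j => f (w k j)) (k + i)) = 0 := by
      intro f k
      funext a
      have h2 := congrArg f (hkey k a)
      rw [map_sum, map_zero] at h2
      simp only [map_sum] at h2
      have h3 : ∀ (κ : Fin (ℓ + 1)) (j : Fin p),
          f ((D κ a j : ℂ) * w (k + κ) j) = D κ a j * f (w (k + κ) j) := by
        intro κ j
        rw [← Complex.real_smul, f.map_smul, smul_eq_mul]
      simp only [h3] at h2
      simp only [Finset.sum_apply, Matrix.mulVec, dotProduct, Pi.zero_apply]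
      exact h2
    have hyr := hstab (fun k j => Complex.reLm (w k j)) (hparts Complex.reLm)
    have hyi := hstab (fun k j => Complex.imLm (w k j)) (hparts Complex.imLm)
    have hsum : Tendsto (fun k => ‖(fun j => Complex.reLm (w k j) : Fin p → ℝ)‖
        + ‖(fun j => Complex.imLm (w k j) : Fin p → ℝ)‖) atTop (nhds 0) := by
      simpa using hyr.add hyi
    have hev := hsum.eventually_lt_const hv
    obtain ⟨k, hk⟩ := hev.exists
    have hb1 : ‖v‖ ≤ ‖w k‖ := by
      have : w k = lam ^ k • v := by
        funext j; simp [hw, Pi.smul_apply, smul_eq_mul]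
      rw [this, norm_smul]
      have h1le : 1 ≤ ‖lam ^ k‖ := by
        rw [norm_pow]
        exact one_le_pow₀ habs
      nlinarith [norm_nonneg v]
    have hb2 : ‖w k‖ ≤ ‖(fun j => Complex.reLm (w k j) : Fin p → ℝ)‖
        + ‖(fun j => Complex.imLm (w k j) : Fin p → ℝ)‖ := by
      rw [pi_norm_le_iff_of_nonneg (by positivity)]
      intro j
      have hr1 : |(w k j).re| ≤ ‖(fun j => Complex.reLm (w k j) : Fin p → ℝ)‖ := by
        simpa [Real.norm_eq_abs] using
          norm_le_pi_norm (fun j => Complex.reLm (w k j) : Fin p → ℝ) j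
      have hr2 : |(w k j).im| ≤ ‖(fun j => Complex.imLm (w k j) : Fin p → ℝ)‖ := by
        simpa [Real.norm_eq_abs] using
          norm_le_pi_norm (fun j => Complex.imLm (w k j) : Fin p → ℝ) j
      calc ‖w k j‖ = ‖w k j‖ := rfl
        _ ≤ |(w k j).re| + |(w k j).im| := Complex.norm_le_abs_re_add_abs_im _
        _ ≤ _ := add_le_add hr1 hr2
    linarith
  · intro hroots y hy
    set χ : ℝ[X] := (polyMatrix D).det with hχ
    set q : ℂ[X] := χ.map (algebraMap ℝ ℂ) with hq
    have hq0 : q ≠ 0 := by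
      rw [hq, Polynomial.map_ne_zero_iff (algebraMap ℝ ℂ).injective]
      exact hD
    have hdq : q.natDegree ≤ χ.natDegree := Polynomial.natDegree_map_le
    have hqroot : ∀ μ : ℂ, q.IsRoot μ → ‖μ‖ < 1 := by
      intro μ hμ
      apply hroots μ
      rwa [Polynomial.aeval_def, ← Polynomial.eval_map]
    have hcomp : ∀ i : Fin p, Tendsto (fun k => ‖y k i‖) atTop (nhds 0) := by
      intro i
      have hrec := component_scalar_recurrence D y hy i
      set xc : ℕ → ℂ := fun k => ((y k i : ℝ) : ℂ) with hxc
      have hxcrec : (Polynomial.aeval (shiftL ℂ) q) xc = 0 := by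
        funext k
        rw [Pi.zero_apply,
          aeval_shiftL_apply q (lt_of_le_of_lt hdq (Nat.lt_succ_self _)) xc k]
        have h1 := congrFun hrec k
        rw [aeval_shiftL_apply χ (Nat.lt_succ_self _) _ k, Pi.zero_apply] at h1
        have h2 : ((∑ j ∈ Finset.range (χ.natDegree + 1), χ.coeff j * y (k + j) i : ℝ) : ℂ)
            = ∑ j ∈ Finset.range (χ.natDegree + 1), q.coeff j * xc (k + j) := by
          push_cast
          refine Finset.sum_congr rfl fun j _ => ?_
          rw [hq, Polynomial.coeff_map, Complex.coe_algebraMap]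
        rw [← h2, h1, Complex.ofReal_zero]
      have hlim := scalar_decay q.natDegree q le_rfl hq0 hqroot xc hxcrec
      rw [tendsto_zero_iff_norm_tendsto_zero] at hlim
      simpa [hxc, Complex.norm_real] using hlim
    have hsum : Tendsto (fun k => ∑ i : Fin p, ‖y k i‖) atTop (nhds 0) := by
      have h := tendsto_finset_sum (Finset.univ : Finset (Fin p)) (fun i _ => hcomp i)
      simpa using h
    refine squeeze_zero (fun k => norm_nonneg _) (fun k => ?_) hsum
    rw [pi_norm_le_iff_of_nonneg (Finset.sum_nonneg fun i _ => norm_nonneg _)]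
    intro i
    exact Finset.single_le_sum (fun i _ => norm_nonneg _) (Finset.mem_univ i)
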